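/- Let γ ≥ 1, μ > 0, v₊ > 1 and 0 < ε < 1 with 1 + ε^{1/(γ+1)} < v₊. Let p_ε(v) = ε(v−1)^{−γ}, v₋^ε := 1 + ε^{1/γ}, s_ε := sqrt((p_ε(v₋^ε) − p_ε(v₊))/(v₊ − v₋^ε)), and Φ_ε(v) := s_ε²(v₊ − v) + p_ε(v₊) − p_ε(v). Then there exists a differentiable function v̄_ε : ℝ → ℝ such that: v̄_ε(0) = 1 + ε^{1/(γ+1)}; v₋^ε < v̄_ε(x) < v₊ for all x ∈ ℝ; v̄_ε'(x) = (v̄_ε(x)/(μ s_ε)) Φ_ε(v̄_ε(x)) for all x ∈ ℝ; v̄_ε is strictly increasing; v̄_ε(x) → v₋^ε as x → −∞ and v̄_ε(x) → v₊ as x → +∞. -/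

import Mathlib

open Set Filter MeasureTheory intervalIntegral

lemma stmt6_ode (a b c K : ℝ) (hac : a < c) (hcb : c < b) (hK : 0 < K)
    (F : ℝ → ℝ)
    (hFc : ∀ v ∈ Ioo a b, ContinuousAt F v)
    (hF0 : ∀ v ∈ Ioo a b, 0 < F v)
    (hFr : ∀ v ∈ Ioo a b, F v ≤ K * (b - v))
    (hFl : ∀ v ∈ Ioo a b, F v ≤ K * (v - a)) :
    ∃ vb : ℝ → ℝ, vb 0 = c ∧ (∀ x, a < vb x ∧ vb x < b) ∧
      (∀ x, HasDerivAt vb (F (vb x)) x) ∧ StrictMono vb ∧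
      Tendsto vb atBot (nhds a) ∧ Tendsto vb atTop (nhds b) := by
  have hab : a < b := hac.trans hcb
  have hc : c ∈ Ioo a b := ⟨hac, hcb⟩
  set h : ℝ → ℝ := fun v => (F v)⁻¹ with hh
  have hhc : ∀ v ∈ Ioo a b, ContinuousAt h v := fun v hv =>
    (hFc v hv).inv₀ (hF0 v hv).ne'
  have hhOn : ContinuousOn h (Ioo a b) := fun v hv => (hhc v hv).continuousWithinAt
  have hhpos : ∀ v ∈ Ioo a b, 0 < h v := fun v hv => inv_pos.2 (hF0 v hv)
  have hint : ∀ u ∈ Ioo a b, ∀ v ∈ Ioo a b, IntervalIntegrable h volume u v := by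
    intro u hu v hv
    exact (hhOn.mono (Set.OrdConnected.uIcc_subset Set.ordConnected_Ioo hu hv)).intervalIntegrable
  set g : ℝ → ℝ := fun v => ∫ t in c..v, h t with hgdef
  have hg : ∀ v ∈ Ioo a b, HasDerivAt g (h v) v := by
    intro v hv
    exact intervalIntegral.integral_hasDerivAt_right (hint c hc v hv)
      (ContinuousOn.stronglyMeasurableAtFilter isOpen_Ioo hhOn v hv) (hhc v hv)
  have gcont : ContinuousOn g (Ioo a b) := fun v hv =>
    (hg v hv).continuousAt.continuousWithinAt
  have gmono : StrictMonoOn g (Ioo a b) := by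
    apply strictMonoOn_of_deriv_pos (convex_Ioo a b) gcont
    intro x hx
    rw [interior_Ioo] at hx
    rw [(hg x hx).deriv]
    exact hhpos x hx
  -- growth at the right end
  have hgrow : ∀ y : ℝ, ∃ v ∈ Ioo a b, y ≤ g v := by
    intro y
    set δ : ℝ := (b - c) * Real.exp (-K * (|y| + 1)) with hδ
    have hδ0 : 0 < δ := mul_pos (by linarith) (Real.exp_pos _)
    have hδle : δ ≤ b - c := by
      have : Real.exp (-K * (|y| + 1)) ≤ 1 := by
        apply Real.exp_le_one_iff.2
        nlinarith [abs_nonneg y]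
      nlinarith
    set v : ℝ := b - δ with hv
    have hcv : c ≤ v := by simp only [hv]; linarith
    have hvb : v < b := by simp only [hv]; linarith
    have hvm : v ∈ Ioo a b := ⟨lt_of_lt_of_le hac hcv, hvb⟩
    have hsub : Icc c v ⊆ Ioo a b := fun t ht => ⟨lt_of_lt_of_le hac ht.1, lt_of_le_of_lt ht.2 hvb⟩
    have hbt : ∀ t ∈ Icc c v, 0 < b - t := fun t ht => by
      have := ht.2; simp only [sub_pos]; linarith
    -- comparison integrand
    have hcontc : ContinuousOn (fun t => (K * (b - t))⁻¹) (Icc c v) := by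
      apply ContinuousOn.inv₀
      · exact (continuousOn_const.mul ((continuous_const.sub continuous_id).continuousOn))
      · intro t ht
        exact ne_of_gt (mul_pos hK (hbt t ht))
    have hintc : IntervalIntegrable (fun t => (K * (b - t))⁻¹) volume c v := by
      apply ContinuousOn.intervalIntegrable
      rwa [uIcc_of_le hcv]
    have hmono : ∫ t in c..v, (K * (b - t))⁻¹ ≤ g v := by
      apply intervalIntegral.integral_mono_on hcv hintc (hint c hc v hvm)
      intro t ht
      have htm := hsub ht
      have h1 : F t ≤ K * (b - t) := hFr t htm
      have h2 : 0 < F t := hF0 t htm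
      exact inv_anti₀ h2 h1
    -- compute the comparison integral via FTC
    have hder : ∀ t ∈ uIcc c v, HasDerivAt (fun t => -K⁻¹ * Real.log (b - t))
        ((K * (b - t))⁻¹) t := by
      intro t ht
      rw [uIcc_of_le hcv] at ht
      have hbt' : 0 < b - t := hbt t ht
      have d1 : HasDerivAt (fun t : ℝ => b - t) (-1) t := by
        simpa using (hasDerivAt_id t).const_sub b
      have d2 : HasDerivAt (fun t : ℝ => Real.log (b - t)) ((b - t)⁻¹ * (-1)) t :=
        (Real.hasDerivAt_log hbt'.ne').comp t d1
      have d3 := d2.const_mul (-K⁻¹)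
      exact d3.congr_deriv (by rw [mul_inv]; ring)
    have hftc := intervalIntegral.integral_eq_sub_of_hasDerivAt hder hintc
    have hlog : Real.log (b - v) = Real.log (b - c) + (-K * (|y| + 1)) := by
      have : b - v = δ := by simp [hv]
      rw [this, hδ, Real.log_mul (by linarith : b - c ≠ 0) (Real.exp_ne_zero _), Real.log_exp]
    refine ⟨v, hvm, ?_⟩
    have hval : ∫ t in c..v, (K * (b - t))⁻¹ = |y| + 1 := by
      rw [hftc]; simp only [hlog]
      field_simp
      ring
    have : y ≤ |y| + 1 := by linarith [le_abs_self y]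
    linarith [hmono, hval.symm ▸ hmono]
  -- drop at the left end
  have hdrop : ∀ y : ℝ, ∃ v ∈ Ioo a b, g v ≤ y := by
    intro y
    set δ : ℝ := (c - a) * Real.exp (-K * (|y| + 1)) with hδ
    have hδ0 : 0 < δ := mul_pos (by linarith) (Real.exp_pos _)
    have hδle : δ ≤ c - a := by
      have : Real.exp (-K * (|y| + 1)) ≤ 1 := by
        apply Real.exp_le_one_iff.2
        nlinarith [abs_nonneg y]
      nlinarith
    set v : ℝ := a + δ with hv
    have hvc : v ≤ c := by simp only [hv]; linarith
    have hav : a < v := by simp only [hv]; linarith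
    have hvm : v ∈ Ioo a b := ⟨hav, lt_of_le_of_lt hvc hcb⟩
    have hsub : Icc v c ⊆ Ioo a b := fun t ht => ⟨lt_of_lt_of_le hav ht.1, lt_of_le_of_lt ht.2 hcb⟩
    have hta : ∀ t ∈ Icc v c, 0 < t - a := fun t ht => by
      have := ht.1; simp only [sub_pos]; linarith
    have hcontc : ContinuousOn (fun t => (K * (t - a))⁻¹) (Icc v c) := by
      apply ContinuousOn.inv₀
      · exact (continuousOn_const.mul ((continuous_id.sub continuous_const).continuousOn))
      · intro t ht
        exact ne_of_gt (mul_pos hK (hta t ht))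
    have hintc : IntervalIntegrable (fun t => (K * (t - a))⁻¹) volume v c := by
      apply ContinuousOn.intervalIntegrable
      rwa [uIcc_of_le hvc]
    have hmono : ∫ t in v..c, (K * (t - a))⁻¹ ≤ ∫ t in v..c, h t := by
      apply intervalIntegral.integral_mono_on hvc hintc (hint v hvm c hc)
      intro t ht
      have htm := hsub ht
      exact inv_anti₀ (hF0 t htm) (hFl t htm)
    have hder : ∀ t ∈ uIcc v c, HasDerivAt (fun t => K⁻¹ * Real.log (t - a))
        ((K * (t - a))⁻¹) t := by
      intro t ht
      rw [uIcc_of_le hvc] at ht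
      have hta' : 0 < t - a := hta t ht
      have d1 : HasDerivAt (fun t : ℝ => t - a) 1 t := (hasDerivAt_id t).sub_const a
      have d2 : HasDerivAt (fun t : ℝ => Real.log (t - a)) ((t - a)⁻¹ * 1) t :=
        by have := (Real.hasDerivAt_log hta'.ne').comp t d1; exact this
      have d3 := d2.const_mul K⁻¹
      exact d3.congr_deriv (by rw [mul_inv]; ring)
    have hftc := intervalIntegral.integral_eq_sub_of_hasDerivAt hder hintc
    have hlog : Real.log (v - a) = Real.log (c - a) + (-K * (|y| + 1)) := by
      have : v - a = δ := by simp [hv]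
      rw [this, hδ, Real.log_mul (by linarith : c - a ≠ 0) (Real.exp_ne_zero _), Real.log_exp]
    refine ⟨v, hvm, ?_⟩
    have hval : ∫ t in v..c, (K * (t - a))⁻¹ = |y| + 1 := by
      rw [hftc]; simp only [hlog]
      field_simp
      ring
    have hgv : g v = -∫ t in v..c, h t := by
      simp only [hgdef]
      rw [intervalIntegral.integral_symm]
    have : -(|y| + 1) ≤ y := by
      have := neg_abs_le y; linarith
    rw [hgv]
    rw [hval] at hmono
    linarith
  -- surjectivity
  have hsurj : ∀ y : ℝ, ∃ v, v ∈ Ioo a b ∧ g v = y := by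
    intro y
    obtain ⟨v1, hv1, h1⟩ := hdrop y
    obtain ⟨v2, hv2, h2⟩ := hgrow y
    rcases le_total v1 v2 with hle | hle
    · have hsub : Icc v1 v2 ⊆ Ioo a b := fun t ht =>
        ⟨lt_of_lt_of_le hv1.1 ht.1, lt_of_le_of_lt ht.2 hv2.2⟩
      have := intermediate_value_Icc hle (gcont.mono hsub)
      obtain ⟨v, hvmem, hgv⟩ := this ⟨h1, h2⟩
      exact ⟨v, hsub hvmem, hgv⟩
    · have : g v2 ≤ g v1 := gmono.monotoneOn hv2 hv1 hle
      refine ⟨v1, hv1, le_antisymm h1 (le_trans h2 this)⟩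
  choose vb hvbmem hvbeq using hsurj
  have hvb0 : vb 0 = c := by
    apply gmono.injOn (hvbmem 0) hc
    rw [hvbeq 0]
    simp [hgdef]
  have hvbmono : StrictMono vb := by
    intro x y hxy
    by_contra hle
    push_neg at hle
    have := gmono.monotoneOn (hvbmem y) (hvbmem x) hle
    rw [hvbeq x, hvbeq y] at this
    exact absurd this (not_le.2 hxy)
  -- auxiliary: from g u < y conclude u < vb y
  have hinv : ∀ u ∈ Ioo a b, ∀ y : ℝ, g u < y → u < vb y := by
    intro u hu y hgu
    by_contra hle
    push_neg at hle
    have := gmono.monotoneOn (hvbmem y) hu hle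
    rw [hvbeq y] at this
    linarith
  have hinv' : ∀ u ∈ Ioo a b, ∀ y : ℝ, y < g u → vb y < u := by
    intro u hu y hgu
    by_contra hle
    push_neg at hle
    have := gmono.monotoneOn hu (hvbmem y) hle
    rw [hvbeq y] at this
    linarith
  have hcontvb : ∀ x : ℝ, ContinuousAt vb x := by
    intro x
    rw [ContinuousAt]
    apply tendsto_order.2
    constructor
    · intro a' ha'
      have hx := hvbmem x
      set u : ℝ := max a' ((a + vb x) / 2) with hu
      have humem : u ∈ Ioo a b := by
        constructor
        · apply lt_max_of_lt_right; linarith [hx.1]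
        · apply max_lt (lt_trans ha' hx.2); linarith [hx.2]
      have huvx : u < vb x := by
        apply max_lt ha'; linarith [hx.1]
      have hgux : g u < x := by
        rw [← hvbeq x]
        exact gmono humem hx huvx
      filter_upwards [Ioi_mem_nhds hgux] with y hy
      exact lt_of_le_of_lt (le_max_left _ _) (hinv u humem y hy)
    · intro b' hb'
      have hx := hvbmem x
      set u : ℝ := min b' ((vb x + b) / 2) with hu
      have humem : u ∈ Ioo a b := by
        constructor
        · apply lt_min (lt_trans hx.1 hb'); linarith [hx.1]
        · apply min_lt_of_right_lt; linarith [hx.2]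
      have huvx : vb x < u := by
        apply lt_min hb'; linarith [hx.2]
      have hgux : x < g u := by
        rw [← hvbeq x]
        exact gmono hx humem huvx
      filter_upwards [Iio_mem_nhds hgux] with y hy
      exact lt_of_lt_of_le (hinv' u humem y hy) (min_le_left _ _)
  have hderiv : ∀ x : ℝ, HasDerivAt vb (F (vb x)) x := by
    intro x
    have hx := hvbmem x
    have hgd : HasDerivAt g (h (vb x)) (vb x) := hg _ hx
    have hne : h (vb x) ≠ 0 := (hhpos _ hx).ne'
    have := HasDerivAt.of_local_left_inverse (hcontvb x) hgd hne
      (Filter.Eventually.of_forall hvbeq)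
    simpa [hh, inv_inv] using this
  refine ⟨vb, hvb0, fun x => ⟨(hvbmem x).1, (hvbmem x).2⟩, hderiv, hvbmono, ?_, ?_⟩
  · -- atBot to a
    apply tendsto_order.2
    constructor
    · intro a' ha'
      exact Filter.Eventually.of_forall fun y => lt_trans ha' (hvbmem y).1
    · intro b' hb'
      rcases lt_or_ge b b' with hbb | hbb
      · exact Filter.Eventually.of_forall fun y => lt_trans (hvbmem y).2 hbb
      · set u : ℝ := (a + b') / 2 with hudef
        have humem : u ∈ Ioo a b := ⟨by simp only [hudef]; linarith, by simp only [hudef]; linarith⟩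
        have hub' : u < b' := by simp only [hudef]; linarith
        filter_upwards [eventually_lt_atBot (g u)] with y hy
        exact lt_trans (hinv' u humem y hy) hub'
  · -- atTop to b
    apply tendsto_order.2
    constructor
    · intro a' ha'
      rcases le_or_gt a' a with haa | haa
      · exact Filter.Eventually.of_forall fun y => lt_of_le_of_lt haa (hvbmem y).1
      · set u : ℝ := (a' + b) / 2 with hudef
        have humem : u ∈ Ioo a b := ⟨by simp only [hudef]; linarith, by simp only [hudef]; linarith⟩
        have hua' : a' < u := by simp only [hudef]; linarith
        filter_upwards [eventually_gt_atTop (g u)] with y hy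
        exact lt_trans hua' (hinv u humem y hy)
    · intro b' hb'
      exact Filter.Eventually.of_forall fun y => lt_trans (hvbmem y).2 hb'


/-- Existence of the soft-congestion traveling-wave profile `v̄_ε`: a strictly increasing
solution of `v̄_ε' = (v̄_ε/(μ s_ε)) Φ_ε(v̄_ε)` with values in `(v₋^ε, v₊)`, normalized by
`v̄_ε(0) = 1 + ε^{1/(γ+1)}`, connecting `v₋^ε` at `−∞` to `v₊` at `+∞`. -/
theorem stmt6 (γ μ vp ε : ℝ) (hγ : 1 ≤ γ) (hμ : 0 < μ) (hvp : 1 < vp)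
    (hε : 0 < ε) (hε1 : ε < 1) (hnorm : 1 + ε ^ (1 / (γ + 1)) < vp)
    (pe : ℝ → ℝ) (hpe : ∀ v : ℝ, pe v = ε * (v - 1) ^ (-γ))
    (vm : ℝ) (hvm : vm = 1 + ε ^ (1 / γ))
    (se : ℝ) (hse : se = Real.sqrt ((pe vm - pe vp) / (vp - vm)))
    (Φ : ℝ → ℝ) (hΦ : ∀ v : ℝ, Φ v = se ^ 2 * (vp - v) + pe vp - pe v) :
    ∃ vb : ℝ → ℝ,
      vb 0 = 1 + ε ^ (1 / (γ + 1)) ∧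
      (∀ x : ℝ, vm < vb x ∧ vb x < vp) ∧
      (∀ x : ℝ, HasDerivAt vb (vb x / (μ * se) * Φ (vb x)) x) ∧
      StrictMono vb ∧
      Tendsto vb atBot (nhds vm) ∧
      Tendsto vb atTop (nhds vp) := by
  have hγ0 : 0 < γ := by linarith
  have hεγ : (0:ℝ) < ε ^ (1/γ) := Real.rpow_pos_of_pos hε _
  have h1vm : 1 < vm := by rw [hvm]; linarith
  have hvmc : vm < 1 + ε ^ (1/(γ+1)) := by
    rw [hvm]
    have h2 : 1/(γ+1) < 1/γ := one_div_lt_one_div_of_lt hγ0 (by linarith)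
    have := Real.rpow_lt_rpow_of_exponent_gt hε hε1 h2
    linarith
  have hvmp : vm < vp := lt_trans hvmc hnorm
  -- pressure monotone decreasing
  have hpanti : ∀ u v : ℝ, 1 < u → u < v → pe v < pe u := by
    intro u v hu huv
    rw [hpe, hpe]
    have := Real.rpow_lt_rpow_of_neg (show (0:ℝ) < u - 1 by linarith)
      (show u - 1 < v - 1 by linarith) (show -γ < 0 by linarith)
    nlinarith
  have hpanti' : ∀ u v : ℝ, 1 < u → u ≤ v → pe v ≤ pe u := by
    intro u v hu huv
    rcases eq_or_lt_of_le huv with rfl | h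
    · exact le_refl _
    · exact (hpanti u v hu h).le
  have hpm : pe vp < pe vm := hpanti vm vp h1vm hvmp
  have hsq : se ^ 2 = (pe vm - pe vp) / (vp - vm) := by
    rw [hse]
    exact Real.sq_sqrt (div_nonneg (by linarith) (by linarith))
  have hse0 : 0 < se := by
    rw [hse]
    exact Real.sqrt_pos.2 (div_pos (by linarith) (by linarith))
  have hkey : se ^ 2 * (vp - vm) = pe vm - pe vp := by
    rw [hsq]; field_simp
    rw [mul_div_assoc, div_self (show vp - vm ≠ 0 by linarith), mul_one]
  have hΦvm : Φ vm = 0 := by rw [hΦ]; linarith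
  have hΦvp : Φ vp = 0 := by rw [hΦ]; ring
  -- derivatives of pe
  have hpders : ∀ v : ℝ, 1 < v →
      HasDerivAt pe (ε * (-γ * (v-1) ^ (-γ-1))) v := by
    intro v hv
    have h0 : HasDerivAt (fun w : ℝ => w - 1) 1 v := (hasDerivAt_id v).sub_const 1
    have h1 := (Real.hasDerivAt_rpow_const (x := v - 1) (p := -γ)
      (Or.inl (by linarith : v - 1 ≠ 0))).comp v h0
    have h2 := h1.const_mul ε
    have hfe : pe = fun w : ℝ => ε * (w - 1) ^ (-γ) := funext hpe
    rw [hfe]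
    simpa using h2
  have hΦders : ∀ v : ℝ, 1 < v →
      HasDerivAt Φ (-se^2 - ε * (-γ * (v-1) ^ (-γ-1))) v := by
    intro v hv
    have hfe : Φ = fun w : ℝ => se^2 * (vp - w) + pe vp - pe w := funext hΦ
    rw [hfe]
    have d1 : HasDerivAt (fun w : ℝ => se^2 * (vp - w) + pe vp) (se^2 * (-1)) v := by
      exact (((hasDerivAt_id v).const_sub vp).const_mul (se^2)).add_const (pe vp)
    have := d1.sub (hpders v hv)
    exact this.congr_deriv (by ring)
  have hΦcont : ∀ v : ℝ, 1 < v → ContinuousAt Φ v := fun v hv =>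
    (hΦders v hv).continuousAt
  -- second derivative negative ⇒ strict concavity
  set φ1 : ℝ → ℝ := fun v => -se^2 + ε*γ*(v-1) ^ (-γ-1) with hφ1def
  have hderivΦ : ∀ v ∈ Ioi (1:ℝ), deriv Φ v = φ1 v := by
    intro v hv
    rw [(hΦders v hv).deriv, hφ1def]
    ring
  have hφ1d : ∀ v : ℝ, 1 < v →
      HasDerivAt φ1 (ε*γ*((-γ-1) * (v-1) ^ (-γ-1-1))) v := by
    intro v hv
    have h0 : HasDerivAt (fun w : ℝ => w - 1) 1 v := (hasDerivAt_id v).sub_const 1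
    have h1 := (Real.hasDerivAt_rpow_const (x := v - 1) (p := -γ-1)
      (Or.inl (by linarith : v - 1 ≠ 0))).comp v h0
    have h2 := (h1.const_mul (ε*γ)).const_add (-se^2)
    rw [hφ1def]
    simpa [mul_assoc] using h2
  have hderiv2 : ∀ v ∈ interior (Icc vm vp), deriv^[2] Φ v < 0 := by
    intro v hv
    rw [interior_Icc] at hv
    have hv1 : 1 < v := lt_trans h1vm hv.1
    have heq : deriv Φ =ᶠ[nhds v] φ1 :=
      Filter.eventuallyEq_of_mem (Ioi_mem_nhds hv1) hderivΦ
    have h2 : deriv (deriv Φ) v = deriv φ1 v := heq.deriv_eq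
    have h3 : deriv φ1 v = ε*γ*((-γ-1) * (v-1) ^ (-γ-1-1)) := (hφ1d v hv1).deriv
    have hp := Real.rpow_pos_of_pos (show (0:ℝ) < v - 1 by linarith) (-γ-1-1)
    have : deriv^[2] Φ v = deriv (deriv Φ) v := by
      simp [Function.iterate_succ, Function.iterate_zero, Function.comp]
    rw [this, h2, h3]
    nlinarith [mul_pos (mul_pos (mul_pos hε hγ0) hp) (show (0:ℝ) < γ+1 by linarith)]
  have hΦcOn : ContinuousOn Φ (Icc vm vp) := fun v hv =>
    (hΦcont v (lt_of_lt_of_le h1vm hv.1)).continuousWithinAt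
  have hconc : StrictConcaveOn ℝ (Icc vm vp) Φ :=
    strictConcaveOn_of_deriv2_neg (convex_Icc _ _) hΦcOn hderiv2
  have hΦpos : ∀ v ∈ Ioo vm vp, 0 < Φ v := by
    intro v hv
    have hne : (0:ℝ) < vp - vm := by linarith
    set A : ℝ := (vp - v)/(vp - vm) with hA
    set B : ℝ := (v - vm)/(vp - vm) with hB
    have hA0 : 0 < A := div_pos (by linarith [hv.2]) hne
    have hB0 : 0 < B := div_pos (by linarith [hv.1]) hne
    have hAB : A + B = 1 := by rw [hA, hB]; field_simp; ring
    have hpt : A • vm + B • vp = v := by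
      simp only [smul_eq_mul, hA, hB]
      field_simp
      ring
    have h := hconc.2 (left_mem_Icc.2 hvmp.le) (right_mem_Icc.2 hvmp.le)
      (ne_of_lt hvmp) hA0 hB0 hAB
    rw [hpt, hΦvm, hΦvp] at h
    simpa using h
  -- bounds on Φ
  set L : ℝ := ε*γ*(vm-1) ^ (-γ-1) with hLdef
  have hL0 : 0 < L := mul_pos (mul_pos hε hγ0) (Real.rpow_pos_of_pos (by linarith) _)
  have hΦr : ∀ v ∈ Ioo vm vp, Φ v ≤ se^2 * (vp - v) := by
    intro v hv
    rw [hΦ]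
    have := hpanti v vp (lt_trans h1vm hv.1) hv.2
    linarith
  have hη : MonotoneOn (fun w => L*(w - vm) + pe w) (Icc vm vp) := by
    have hder : ∀ w : ℝ, 1 < w →
        HasDerivAt (fun w => L*(w - vm) + pe w) (L*1 + ε * (-γ * (w-1) ^ (-γ-1))) w := by
      intro w hw
      exact (((hasDerivAt_id w).sub_const vm).const_mul L).add (hpders w hw)
    apply monotoneOn_of_deriv_nonneg (convex_Icc _ _)
    · intro w hw
      exact (hder w (lt_of_lt_of_le h1vm hw.1)).continuousAt.continuousWithinAt
    · intro w hw
      rw [interior_Icc] at hw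
      exact (hder w (lt_trans h1vm hw.1)).differentiableAt.differentiableWithinAt
    · intro w hw
      rw [interior_Icc] at hw
      have hw1 : 1 < w := lt_trans h1vm hw.1
      rw [(hder w hw1).deriv]
      have hle : (w-1) ^ (-γ-1) ≤ (vm-1) ^ (-γ-1) :=
        Real.rpow_le_rpow_of_nonpos (by linarith) (by linarith [hw.1]) (by linarith)
      have hmul : ε * γ * (w-1) ^ (-γ-1) ≤ L := by
        rw [hLdef]
        have := mul_pos hε hγ0
        nlinarith
      nlinarith
  have hpeL : ∀ v ∈ Icc vm vp, pe vm - pe v ≤ L * (v - vm) := by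
    intro v hv
    have := hη (left_mem_Icc.2 hvmp.le) hv hv.1
    simp only [sub_self, mul_zero, zero_add] at this
    linarith
  have hΦl : ∀ v ∈ Ioo vm vp, Φ v ≤ L * (v - vm) := by
    intro v hv
    have e : se^2*(vp-v) = se^2*(vp-vm) - se^2*(v-vm) := by ring
    have h1 : Φ v = (pe vm - pe v) - se^2*(v - vm) := by
      rw [hΦ]; linarith [hkey, e]
    have h2 := hpeL v (Ioo_subset_Icc_self hv)
    have h3 : 0 ≤ se^2*(v-vm) := mul_nonneg (sq_nonneg se) (by linarith [hv.1])
    linarith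
  -- assemble F and K and conclude via the abstract lemma
  have hμs : 0 < μ * se := mul_pos hμ hse0
  set F : ℝ → ℝ := fun v => v / (μ * se) * Φ v with hFdef
  set K : ℝ := vp / (μ*se) * max (se^2) L with hKdef
  have hvps : 0 < vp / (μ*se) := div_pos (by linarith) hμs
  have hK0 : 0 < K := mul_pos hvps (lt_max_of_lt_left (pow_pos hse0 2))
  have hFc : ∀ v ∈ Ioo vm vp, ContinuousAt F v := by
    intro v hv
    exact ((continuous_id.div_const (μ*se)).continuousAt).mul
      (hΦcont v (lt_trans h1vm hv.1))
  have hF0 : ∀ v ∈ Ioo vm vp, 0 < F v := by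
    intro v hv
    exact mul_pos (div_pos (by linarith [hv.1] : (0:ℝ) < v) hμs) (hΦpos v hv)
  have hFr : ∀ v ∈ Ioo vm vp, F v ≤ K * (vp - v) := by
    intro v hv
    calc F v = v/(μ*se) * Φ v := rfl
      _ ≤ vp/(μ*se) * Φ v :=
          mul_le_mul_of_nonneg_right (by gcongr; exact hv.2.le) (hΦpos v hv).le
      _ ≤ vp/(μ*se) * (se^2 * (vp - v)) := mul_le_mul_of_nonneg_left (hΦr v hv) hvps.le
      _ = (vp/(μ*se) * se^2) * (vp - v) := by ring
      _ ≤ K * (vp - v) := by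
          apply mul_le_mul_of_nonneg_right _ (by linarith [hv.2] : (0:ℝ) ≤ vp - v)
          rw [hKdef]
          exact mul_le_mul_of_nonneg_left (le_max_left _ _) hvps.le
  have hFl : ∀ v ∈ Ioo vm vp, F v ≤ K * (v - vm) := by
    intro v hv
    calc F v = v/(μ*se) * Φ v := rfl
      _ ≤ vp/(μ*se) * Φ v :=
          mul_le_mul_of_nonneg_right (by gcongr; exact hv.2.le) (hΦpos v hv).le
      _ ≤ vp/(μ*se) * (L * (v - vm)) := mul_le_mul_of_nonneg_left (hΦl v hv) hvps.le
      _ = (vp/(μ*se) * L) * (v - vm) := by ring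
      _ ≤ K * (v - vm) := by
          apply mul_le_mul_of_nonneg_right _ (by linarith [hv.1] : (0:ℝ) ≤ v - vm)
          rw [hKdef]
          exact mul_le_mul_of_nonneg_left (le_max_right _ _) hvps.le
  obtain ⟨vb, h0, hmem, hd, hmono, hbot, htop⟩ :=
    stmt6_ode vm vp (1 + ε ^ (1 / (γ+1))) K hvmc hnorm hK0 F hFc hF0 hFr hFl
  refine ⟨vb, h0, hmem, fun x => ?_, hmono, hbot, htop⟩
  have := hd x
  simpa [hFdef] using this
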